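/- The edge relation on the projective Fraïssé limit of selections is transitive: Let A be a finite simplicial complex and let (f_n) be a generic sequence for the category S(A) of selections, with inverse limit profinite complex β^∞A. If x₀, x₁, x₂ are vertices of β^∞A with {x₀,x₁} and {x₁,x₂} faces of β^∞A, then {x₀,x₂} is a face of β^∞A. -/

import Mathlib

/-- An abstract simplicial complex: a family of finite nonempty sets closed under
taking nonempty subsets. -/
def IsComplex {V : Type*} (C : Set (Finset V)) : Prop :=
  (∀ σ ∈ C, σ.Nonempty) ∧ ∀ σ ∈ C, ∀ τ : Finset V, τ ⊆ σ → τ.Nonempty → τ ∈ C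

/-- The barycentric subdivision of `C`: vertices are the faces of `C`, and faces
are the nonempty finite chains of faces of `C` under inclusion. -/
def bary {V : Type*} (C : Set (Finset V)) : Set (Finset (Finset V)) :=
  { S | S.Nonempty ∧ (↑S : Set (Finset V)) ⊆ C ∧ IsChain (· ⊆ ·) (↑S : Set (Finset V)) }

/-- `f` is a simplicial map from `C` to `D`: the image of every face of `C` is a face of `D`. -/
def IsSimplicial {V W : Type*} [DecidableEq W]
    (C : Set (Finset V)) (D : Set (Finset W)) (f : V → W) : Prop :=
  ∀ σ ∈ C, σ.image f ∈ D


universe u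

/-- The vertex type of the `n`-fold iterated barycentric subdivision of a complex
on vertex type `V`. -/
def IterV (V : Type u) : ℕ → Type u
  | 0 => V
  | n + 1 => Finset (IterV V n)

instance iterVDecEq {V : Type u} [DecidableEq V] : ∀ n, DecidableEq (IterV V n)
  | 0 => inferInstanceAs (DecidableEq V)
  | n + 1 =>
    haveI := iterVDecEq (V := V) n
    inferInstanceAs (DecidableEq (Finset (IterV V n)))

/-- The `n`-fold iterated barycentric subdivision `β^n A`. -/
def iterBary {V : Type u} (A : Set (Finset V)) : (n : ℕ) → Set (Finset (IterV V n))
  | 0 => A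
  | n + 1 => bary (iterBary A n)

/-- The category `S(A)` of selections on `A`: the smallest family of simplicial maps among
iterated barycentric subdivisions `β^k A` containing all elementary selections
`β^{k+1}A → β^k A` and the identity `1_A`, closed under composition and under the
barycentric-subdivision operation `f ↦ βf`. -/
inductive Sel {V : Type u} [DecidableEq V] (A : Set (Finset V)) :
    (l k : ℕ) → (IterV V l → IterV V k) → Prop
  | elem (k : ℕ) (s : IterV V (k + 1) → IterV V k)
      (hs : ∀ σ ∈ iterBary A k, s σ ∈ σ) : Sel A (k + 1) k s
  | id : Sel A 0 0 (fun x => x)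
  | comp {l m k : ℕ} {f : IterV V m → IterV V k} {g : IterV V l → IterV V m} :
      Sel A m k f → Sel A l m g → Sel A l k (f ∘ g)
  | bary {l k : ℕ} {f : IterV V l → IterV V k} :
      Sel A l k f → Sel A (l + 1) (k + 1) (fun σ => Finset.image f σ)

/-- The composition `f_n ∘ ⋯ ∘ f_{n+m-1}` of a neat sequence of maps
(`chainComp k f n m : β^{k(n+m)}A → β^{k(n)}A`). -/
def chainComp {V : Type u} (k : ℕ → ℕ)
    (f : ∀ n, IterV V (k (n + 1)) → IterV V (k n)) :
    ∀ n m : ℕ, IterV V (k (n + m)) → IterV V (k n)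
  | _, 0 => fun x => x
  | n, m + 1 => fun x => chainComp k f n m (f (n + m) x)

theorem isComplex_bary' {V : Type*} (C : Set (Finset V)) : IsComplex (bary C) := by
  constructor
  · rintro σ ⟨h, -, -⟩; exact h
  · rintro σ ⟨hne, hsub, hch⟩ τ hτ hτne
    exact ⟨hτne, fun x hx => hsub (Finset.coe_subset.mpr hτ hx),
      hch.mono (Finset.coe_subset.mpr hτ)⟩

theorem isComplex_iterBary' {V : Type u} {A : Set (Finset V)} (hA : IsComplex A) :
    ∀ n, IsComplex (iterBary A n)
  | 0 => hA
  | n + 1 => isComplex_bary' (iterBary A n)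

theorem chain_exists_max' {α : Type*} (S : Finset (Finset α)) (hS : S.Nonempty)
    (hch : IsChain (· ⊆ ·) (↑S : Set (Finset α))) :
    ∃ τ ∈ S, ∀ σ ∈ S, σ ⊆ τ := by
  obtain ⟨τ, hτ, hmax⟩ := S.exists_maximal hS
  refine ⟨τ, hτ, fun σ hσ => ?_⟩
  rcases eq_or_ne σ τ with rfl | hne
  · exact subset_rfl
  · rcases hch hσ hτ hne with h | h
    · exact h
    · exact hmax hσ h

theorem sel_simplicial' {V : Type u} [DecidableEq V] {A : Set (Finset V)} (hA : IsComplex A)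
    {l j : ℕ} {g : IterV V l → IterV V j} (hg : Sel A l j g) :
    ∀ σ ∈ iterBary A l, σ.image g ∈ iterBary A j := by
  induction hg with
  | elem k s hs =>
    intro σ hσ
    obtain ⟨hne, hsub, hch⟩ := hσ
    obtain ⟨τ, hτS, hτmax⟩ := chain_exists_max' σ hne hch
    have hτ : τ ∈ iterBary A k := hsub hτS
    have hsubτ : σ.image s ⊆ τ := by
      intro x hx
      simp only [Finset.mem_image] at hx
      obtain ⟨ρ, hρ, rfl⟩ := hx
      exact hτmax ρ hρ (hs ρ (hsub hρ))
    exact (isComplex_iterBary' hA k).2 τ hτ _ hsubτ (hne.image s)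
  | id => intro σ hσ; simpa using hσ
  | comp hf hg ihf ihg =>
    intro σ hσ
    have := ihf _ (ihg σ hσ)
    rwa [Finset.image_image] at this
  | @bary l' k' f' hf ih =>
    intro σ hσ
    obtain ⟨hne, hsub, hch⟩ := hσ
    refine ⟨hne.image _, ?_, ?_⟩
    · intro x hx
      obtain ⟨τ, hτ, rfl⟩ := Finset.mem_image.mp (Finset.mem_coe.mp hx)
      exact ih τ (hsub hτ)
    · intro x hx y hy hxy
      obtain ⟨τ, hτ, rfl⟩ := Finset.mem_image.mp (Finset.mem_coe.mp hx)
      obtain ⟨ρ, hρ, rfl⟩ := Finset.mem_image.mp (Finset.mem_coe.mp hy)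
      rcases eq_or_ne τ ρ with rfl | hne'
      · exact absurd rfl hxy
      · rcases hch hτ hρ hne' with h | h
        · exact Or.inl (Finset.image_subset_image h)
        · exact Or.inr (Finset.image_subset_image h)

theorem chainComp_thread' {V : Type u} (k : ℕ → ℕ)
    (f : ∀ n, IterV V (k (n + 1)) → IterV V (k n))
    (x : ∀ n, IterV V (k n)) (hx : ∀ n, f n (x (n + 1)) = x n) :
    ∀ n m, chainComp k f n m (x (n + m)) = x n := by
  intro n m
  induction m with
  | zero => rfl
  | succ m ih =>
    show chainComp k f n m (f (n + m) (x (n + m + 1))) = x n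
    rw [hx (n + m)]
    exact ih

/-- The abstract combinatorial core: if `s` is the elementary selection preferring `a₂`,
then `a₁`, and three vertices of the barycentric subdivision selecting to `a₀, a₁, a₂`
span the appropriate edges, then `{a₀, a₂}` is a face. -/
theorem pair_step {W : Type*} [DecidableEq W] {C : Set (Finset W)} (hC : IsComplex C)
    (a₀ a₁ a₂ : W) (h02 : a₀ ≠ a₂) (h01e : a₀ ≠ a₁) (h12e : a₁ ≠ a₂)
    (s : Finset W → W)
    (hsdef : s = fun σ => if a₂ ∈ σ then a₂ else if a₁ ∈ σ then a₁
      else if h : σ.Nonempty then h.choose else a₀)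
    (hs : ∀ σ ∈ C, s σ ∈ σ)
    (b₀ b₁ b₂ : Finset W)
    (hs0 : s b₀ = a₀) (hs1 : s b₁ = a₁) (hs2 : s b₂ = a₂)
    (hface01 : ({b₀, b₁} : Finset (Finset W)) ∈ bary C)
    (hface12 : ({b₁, b₂} : Finset (Finset W)) ∈ bary C) :
    ({a₀, a₂} : Finset W) ∈ C := by
  classical
  have hb0mem : b₀ ∈ C := hface01.2.1 (by simp)
  have hb2mem : b₂ ∈ C := hface12.2.1 (by simp)
  have h0b0 : a₀ ∈ b₀ := by
    have := hs b₀ hb0mem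
    rwa [hs0] at this
  have hs0' := hs0; have hs1' := hs1; have hs2' := hs2
  simp only [hsdef] at hs0' hs1' hs2'
  have h2b0 : a₂ ∉ b₀ := by
    intro hmem
    rw [if_pos hmem] at hs0'
    exact h02 hs0'.symm
  have h1b0 : a₁ ∉ b₀ := by
    intro hmem
    rw [if_neg h2b0, if_pos hmem] at hs0'
    exact h01e hs0'.symm
  have h2b1 : a₂ ∉ b₁ := by
    intro hmem
    rw [if_pos hmem] at hs1'
    exact h12e hs1'.symm
  have h1b1 : a₁ ∈ b₁ := by
    by_contra hmem
    rw [if_neg h2b1, if_neg hmem] at hs1'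
    by_cases hne : b₁.Nonempty
    · rw [dif_pos hne] at hs1'
      exact hmem (hs1' ▸ hne.choose_spec)
    · rw [dif_neg hne] at hs1'
      exact h01e hs1'
  have h2b2 : a₂ ∈ b₂ := by
    by_contra hmem
    rw [if_neg hmem] at hs2'
    by_cases h1m : a₁ ∈ b₂
    · rw [if_pos h1m] at hs2'
      exact h12e hs2'
    · rw [if_neg h1m] at hs2'
      by_cases hne : b₂.Nonempty
      · rw [dif_pos hne] at hs2'
        exact hmem (hs2' ▸ hne.choose_spec)
      · rw [dif_neg hne] at hs2'
        exact h02 hs2'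
  have hsub01 : b₀ ⊆ b₁ := by
    rcases eq_or_ne b₀ b₁ with hbe | hbe
    · exact hbe ▸ subset_rfl
    · rcases hface01.2.2 (by simp) (by simp) hbe with hss | hss
      · exact hss
      · exact absurd (hss h1b1) h1b0
  have hsub12 : b₁ ⊆ b₂ := by
    rcases eq_or_ne b₁ b₂ with hbe | hbe
    · exact hbe ▸ subset_rfl
    · rcases hface12.2.2 (by simp) (by simp) hbe with hss | hss
      · exact hss
      · exact absurd (hss h2b2) h2b1
  refine hC.2 b₂ hb2mem _ ?_ ⟨a₀, by simp⟩
  intro y hy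
  simp only [Finset.mem_insert, Finset.mem_singleton] at hy
  rcases hy with rfl | rfl
  · exact hsub12 (hsub01 h0b0)
  · exact h2b2

/-- The edge relation on the projective Fraïssé limit of selections is transitive:
for a generic sequence `(f_n)` for `S(A)` with inverse limit `β^∞A`, if `x₀, x₁, x₂` are
vertices of `β^∞A` such that `{x₀,x₁}` and `{x₁,x₂}` are faces of `β^∞A`, then `{x₀,x₂}`
is a face of `β^∞A`. Vertices are threads through the sequence; a finite set of threads is
a face iff each of its projections is a face. -/
theorem limit_edge_relation_transitive {V : Type u} [DecidableEq V] {A : Set (Finset V)}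
    (hA : IsComplex A) (hfin : A.Finite)
    (k : ℕ → ℕ) (f : ∀ n, IterV V (k (n + 1)) → IterV V (k n))
    (hSel : ∀ n, Sel A (k (n + 1)) (k n) (f n))
    (huniv : ∀ j : ℕ, ∃ (n : ℕ) (g : IterV V (k (n + 1)) → IterV V j),
      Sel A (k (n + 1)) j g)
    (hext : ∀ (n l : ℕ) (g : IterV V l → IterV V (k n)), Sel A l (k n) g →
      ∃ (m : ℕ) (h : IterV V (k (n + m)) → IterV V l), 0 < m ∧
        Sel A (k (n + m)) l h ∧ chainComp k f n m = g ∘ h)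
    (x₀ x₁ x₂ : ∀ n, IterV V (k n))
    (hth₀ : ∀ n, f n (x₀ (n + 1)) = x₀ n)
    (hth₁ : ∀ n, f n (x₁ (n + 1)) = x₁ n)
    (hth₂ : ∀ n, f n (x₂ (n + 1)) = x₂ n)
    (hd₀ : ∀ n, ∃ σ ∈ iterBary A (k n), x₀ n ∈ σ)
    (hd₁ : ∀ n, ∃ σ ∈ iterBary A (k n), x₁ n ∈ σ)
    (hd₂ : ∀ n, ∃ σ ∈ iterBary A (k n), x₂ n ∈ σ)
    (h01 : ∀ n, ({x₀ n, x₁ n} : Finset (IterV V (k n))) ∈ iterBary A (k n))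
    (h12 : ∀ n, ({x₁ n, x₂ n} : Finset (IterV V (k n))) ∈ iterBary A (k n)) :
    ∀ n, ({x₀ n, x₂ n} : Finset (IterV V (k n))) ∈ iterBary A (k n) := by
  classical
  intro n
  by_cases h02 : x₀ n = x₂ n
  · have heq : ({x₀ n, x₂ n} : Finset (IterV V (k n))) = {x₂ n} := by simp [h02]
    rw [heq]
    exact (isComplex_iterBary' hA (k n)).2 _ (h12 n) {x₂ n}
      (by intro y hy; simp at hy; simp [hy]) ⟨_, Finset.mem_singleton_self _⟩
  by_cases h01e : x₀ n = x₁ n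
  · rw [h01e]; exact h12 n
  by_cases h12e : x₁ n = x₂ n
  · have := h01 n; rw [h12e] at this; exact this
  let s : Finset (IterV V (k n)) → IterV V (k n) := fun σ =>
    if x₂ n ∈ σ then x₂ n else if x₁ n ∈ σ then x₁ n
    else if h : σ.Nonempty then h.choose else x₀ n
  have hs : ∀ σ ∈ iterBary A (k n), s σ ∈ σ := by
    intro σ hσ
    have hne : σ.Nonempty := (isComplex_iterBary' hA (k n)).1 σ hσ
    by_cases h2 : x₂ n ∈ σ
    · simpa [s, h2] using h2
    by_cases h1 : x₁ n ∈ σ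
    · simpa [s, h2, h1] using h1
    · simpa [s, h2, h1, hne] using hne.choose_spec
  have hSelS : Sel A (k n + 1) (k n) s := Sel.elem (k n) s hs
  obtain ⟨m, hh, hm, hSelh, hcomp⟩ := hext n (k n + 1) s hSelS
  have key : ∀ x : ∀ j, IterV V (k j), (∀ j, f j (x (j + 1)) = x j) →
      s (hh (x (n + m))) = x n := by
    intro x hx
    have h2 := congrFun hcomp (x (n + m))
    rw [chainComp_thread' k f x hx n m] at h2
    exact h2.symm
  have hface01 : ({hh (x₀ (n + m)), hh (x₁ (n + m))} :
      Finset (Finset (IterV V (k n)))) ∈ bary (iterBary A (k n)) := by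
    have h3 := sel_simplicial' hA hSelh _ (h01 (n + m))
    have h4 : Finset.image hh {x₀ (n + m), x₁ (n + m)}
        = ({hh (x₀ (n + m)), hh (x₁ (n + m))} : Finset (IterV V (k n + 1))) := by simp
    rw [h4] at h3
    exact h3
  have hface12 : ({hh (x₁ (n + m)), hh (x₂ (n + m))} :
      Finset (Finset (IterV V (k n)))) ∈ bary (iterBary A (k n)) := by
    have h3 := sel_simplicial' hA hSelh _ (h12 (n + m))
    have h4 : Finset.image hh {x₁ (n + m), x₂ (n + m)}
        = ({hh (x₁ (n + m)), hh (x₂ (n + m))} : Finset (IterV V (k n + 1))) := by simp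
    rw [h4] at h3
    exact h3
  exact pair_step (isComplex_iterBary' hA (k n)) (x₀ n) (x₁ n) (x₂ n) h02 h01e h12e s rfl hs
    (hh (x₀ (n + m))) (hh (x₁ (n + m))) (hh (x₂ (n + m)))
    (key x₀ hth₀) (key x₁ hth₁) (key x₂ hth₂) hface01 hface12
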